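/- For the complete graph K_n (n ≥ 2) and adjacent vertices x, y, the (α,h)-Ollivier–Ricci curvature is κ̃(α,h;x,y) = (h(1) − h(|α − (1−α)/(n−1)|))/h(1) for all α ∈ [0,1), and consequently the h-LLY–Ricci curvature is κ̃(h;x,y) = (n/(n−1)) · h'(1)/h(1). -/

import Mathlib

open Filter Set Classical

noncomputable section

/-- A hypergraph: a vertex type together with a family of hyperedges. -/
structure Hypergraph' (V : Type*) where
  E : Set (Set V)

namespace Hypergraph'

variable {V : Type*}

/-- Two distinct vertices are adjacent if some hyperedge contains both. -/
def Adj (H : Hypergraph' V) (x y : V) : Prop :=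
  x ≠ y ∧ ∃ e ∈ H.E, x ∈ e ∧ y ∈ e

/-- There is a path of length `n` from `x` to `y` (each consecutive pair lies
in a common hyperedge). -/
def IsPath (H : Hypergraph' V) (x y : V) (n : ℕ) : Prop :=
  ∃ f : ℕ → V, f 0 = x ∧ f n = y ∧ ∀ i < n, ∃ e ∈ H.E, f i ∈ e ∧ f (i + 1) ∈ e

/-- The graph distance on a hypergraph: the shortest length of a path. -/
def dist (H : Hypergraph' V) (x y : V) : ℕ :=
  sInf {n | H.IsPath x y n}

def Connected (H : Hypergraph' V) : Prop := ∀ x y : V, ∃ n, H.IsPath x y n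

def LocallyFinite (H : Hypergraph' V) : Prop := ∀ x : V, {y | H.Adj x y}.Finite

/-- A hypergraph is simple if no hyperedge is contained in a different one. -/
def Simple (H : Hypergraph' V) : Prop :=
  ∀ e₁ ∈ H.E, ∀ e₂ ∈ H.E, e₁ ≠ e₂ → ¬e₁ ⊆ e₂

/-- The degree of a vertex: the number of its neighbours. -/
def degree (H : Hypergraph' V) (x : V) : ℕ := {y | H.Adj x y}.ncard

end Hypergraph'

/-- A finitely supported probability function on `V`. -/
def IsProb {V : Type*} (μ : V → ℝ) : Prop :=
  (∀ v, 0 ≤ μ v) ∧ (Function.support μ).Finite ∧ ∑' v, μ v = 1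

/-- A coupling of two probability functions. -/
def IsCoupling {V : Type*} (π : V → V → ℝ) (μ ν : V → ℝ) : Prop :=
  (∀ x y, 0 ≤ π x y) ∧ (∀ x, ∑' y, π x y = μ x) ∧ (∀ y, ∑' x, π x y = ν y)

/-- The L¹-Wasserstein distance with respect to the graph distance of `H`. -/
def W1 {V : Type*} (H : Hypergraph' V) (μ ν : V → ℝ) : ℝ :=
  sInf {c | ∃ π, IsCoupling π μ ν ∧
    c = ∑' p : V × V, (H.dist p.1 p.2 : ℝ) * π p.1 p.2}

/-- A sequence of probability measures from `μ` to `ν` each of whose increments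
is supported in a single hyperedge. -/
def WhAdmissible {V : Type*} (H : Hypergraph' V) (μ ν : V → ℝ) (I : ℕ)
    (ξ : ℕ → V → ℝ) : Prop :=
  ξ 0 = μ ∧ ξ I = ν ∧ (∀ i ≤ I, IsProb (ξ i)) ∧
    ∀ i < I, ∃ e ∈ H.E, Function.support (fun v => ξ (i + 1) v - ξ i v) ⊆ e

/-- The new transport distance `W_h`. -/
def Wh {V : Type*} (H : Hypergraph' V) (h : ℝ → ℝ) (μ ν : V → ℝ) : ℝ :=
  sInf {c | ∃ I ξ, WhAdmissible H μ ν I ξ ∧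
    c = ∑ i ∈ Finset.range I, h (W1 H (ξ i) (ξ (i + 1)))}

/-- Assumptions on the concave cost function `h`, with one-sided derivatives
`D0 = h'(0)` and `D1 = h'(1)`. -/
structure CostFn (h : ℝ → ℝ) (D0 D1 : ℝ) : Prop where
  nonneg : ∀ x ∈ Set.Icc (0 : ℝ) 1, 0 ≤ h x
  mono : MonotoneOn h (Set.Icc (0 : ℝ) 1)
  cont : ContinuousOn h (Set.Icc (0 : ℝ) 1)
  concave : ConcaveOn ℝ (Set.Icc (0 : ℝ) 1) h
  zero : h 0 = 0
  d0_pos : 0 < D0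
  d0 : Filter.Tendsto (fun t => h t / t) (nhdsWithin 0 (Set.Ioi 0)) (nhds D0)
  d1 : Filter.Tendsto (fun t => (h 1 - h t) / (1 - t))
    (nhdsWithin 1 (Set.Iio 1)) (nhds D1)

/-- The Dirac measure at a point, as a probability function. -/
def dirac {V : Type*} (x : V) : V → ℝ := fun v => if v = x then 1 else 0

/-- The `α`-lazy uniform random walk at `x`. -/
def rw {V : Type*} (H : Hypergraph' V) (α : ℝ) (x : V) : V → ℝ :=
  fun v => if v = x then α else if H.Adj x v then (1 - α) / (H.degree x) else 0

/-- The `(α,h)`-Ollivier–Ricci curvature. -/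
def ORic {V : Type*} (H : Hypergraph' V) (h : ℝ → ℝ) (α : ℝ) (x y : V) : ℝ :=
  1 - Wh H h (rw H α x) (rw H α y) / Wh H h (dirac x) (dirac y)

/-- The `h`-LLY–Ricci curvature. -/
def hLLY {V : Type*} (H : Hypergraph' V) (h : ℝ → ℝ) (x y : V) : ℝ :=
  Filter.liminf (fun α => ORic H h α x y / (1 - α)) (nhdsWithin 1 (Set.Iio 1))

end

/-- The complete graph on `n` vertices, as a hypergraph whose hyperedges are
the two-element subsets. -/
def completeH (n : ℕ) : Hypergraph' (Fin n) :=
  ⟨{e | ∃ a b : Fin n, a ≠ b ∧ e = {a, b}}⟩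

namespace CompleteProof

open Finset

variable {n : ℕ}

lemma edge_mem {a b : Fin n} (hab : a ≠ b) :
    ({a, b} : Set (Fin n)) ∈ (completeH n).E := ⟨a, b, hab, rfl⟩

lemma adj_iff {x y : Fin n} : (completeH n).Adj x y ↔ x ≠ y := by
  constructor
  · exact fun h => h.1
  · intro h; exact ⟨h, ⟨{x, y}, edge_mem h, by simp, by simp⟩⟩

lemma dist_self (x : Fin n) : (completeH n).dist x x = 0 := by
  have : (completeH n).IsPath x x 0 := ⟨fun _ => x, rfl, rfl, by simp⟩
  exact Nat.sInf_eq_zero.mpr (Or.inl this)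

lemma dist_ne {x y : Fin n} (hxy : x ≠ y) : (completeH n).dist x y = 1 := by
  have h1 : (completeH n).IsPath x y 1 := by
    refine ⟨fun i => if i = 0 then x else y, by simp, by simp, ?_⟩
    intro i hi
    interval_cases i
    exact ⟨{x, y}, edge_mem hxy, by simp, by simp⟩
  have hle : (completeH n).dist x y ≤ 1 := Nat.sInf_le h1
  have h0 : (completeH n).dist x y ≠ 0 := by
    intro h
    rcases Nat.sInf_eq_zero.mp h with h | h
    · obtain ⟨f, hf0, hfn, -⟩ := h
      exact hxy (hf0 ▸ hfn ▸ rfl)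
    · rw [Set.eq_empty_iff_forall_notMem] at h
      exact h 1 h1
  omega

lemma degree_eq (hn : 2 ≤ n) (x : Fin n) : (completeH n).degree x = n - 1 := by
  have hset : {y | (completeH n).Adj x y} = ({x}ᶜ : Set (Fin n)) := by
    ext y; simp [adj_iff, ne_comm, Set.mem_compl_iff]
  rw [Hypergraph'.degree, hset]
  rw [Set.ncard_eq_toFinset_card']
  simp [Finset.card_compl]

end CompleteProof
namespace CompleteProof

/-- Total variation–type quantity. -/
def S {n : ℕ} (μ ν : Fin n → ℝ) : ℝ := ∑ v, max (μ v - ν v) 0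

variable {n : ℕ}

lemma isProb_iff {μ : Fin n → ℝ} :
    IsProb μ ↔ (∀ v, 0 ≤ μ v) ∧ ∑ v, μ v = 1 := by
  unfold IsProb
  rw [tsum_fintype]
  exact ⟨fun ⟨a, _, c⟩ => ⟨a, c⟩, fun ⟨a, c⟩ => ⟨a, Set.toFinite _, c⟩⟩

lemma S_nonneg (μ ν : Fin n → ℝ) : 0 ≤ S μ ν :=
  Finset.sum_nonneg fun v _ => le_max_right _ _

lemma S_le_one {μ ν : Fin n → ℝ} (hμ : IsProb μ) (hν : IsProb ν) : S μ ν ≤ 1 := by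
  rw [← (isProb_iff.mp hμ).2]
  refine Finset.sum_le_sum fun v _ => ?_
  exact max_le (by linarith [(isProb_iff.mp hν).1 v]) ((isProb_iff.mp hμ).1 v)

lemma S_triangle (μ ν ρ : Fin n → ℝ) : S μ ρ ≤ S μ ν + S ν ρ := by
  rw [S, S, S, ← Finset.sum_add_distrib]
  refine Finset.sum_le_sum fun v _ => ?_
  rcases le_total (μ v - ν v) 0 with h | h <;> rcases le_total (ν v - ρ v) 0 with h' | h' <;>
    simp [max_def] <;> split_ifs <;> nlinarith [le_max_right (μ v - ν v) 0,
      le_max_right (ν v - ρ v) 0, le_max_left (μ v - ν v) 0, le_max_left (ν v - ρ v) 0]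

lemma S_symm {μ ν : Fin n → ℝ} (hμ : IsProb μ) (hν : IsProb ν) : S ν μ = S μ ν := by
  have h : S μ ν - S ν μ = ∑ v, (μ v - ν v) := by
    rw [S, S, ← Finset.sum_sub_distrib]
    refine Finset.sum_congr rfl fun v _ => ?_
    rcases le_total (μ v - ν v) 0 with h | h <;> simp [max_def] <;> split_ifs <;> linarith
  rw [Finset.sum_sub_distrib, (isProb_iff.mp hμ).2, (isProb_iff.mp hν).2] at h
  linarith

lemma cost_eq {π : Fin n → Fin n → ℝ} :
    ∑' p : Fin n × Fin n, ((completeH n).dist p.1 p.2 : ℝ) * π p.1 p.2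
      = ∑ a, ∑ b, (if a = b then 0 else π a b) := by
  rw [tsum_fintype, Fintype.sum_prod_type]
  refine Finset.sum_congr rfl fun a _ => Finset.sum_congr rfl fun b _ => ?_
  rcases eq_or_ne a b with rfl | hab
  · simp [dist_self]
  · simp [dist_ne hab, hab]

lemma coupling_rowsum {π : Fin n → Fin n → ℝ} {μ ν : Fin n → ℝ}
    (hπ : IsCoupling π μ ν) (a : Fin n) : ∑ b, π a b = μ a := by
  have := hπ.2.1 a; rwa [tsum_fintype] at this

lemma coupling_colsum {π : Fin n → Fin n → ℝ} {μ ν : Fin n → ℝ}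
    (hπ : IsCoupling π μ ν) (b : Fin n) : ∑ a, π a b = ν b := by
  have := hπ.2.2 b; rwa [tsum_fintype] at this

lemma cost_ge {μ ν : Fin n → ℝ} (hν : IsProb ν)
    {π : Fin n → Fin n → ℝ} (hπ : IsCoupling π μ ν) :
    S μ ν ≤ ∑' p : Fin n × Fin n, ((completeH n).dist p.1 p.2 : ℝ) * π p.1 p.2 := by
  rw [cost_eq, S]
  refine Finset.sum_le_sum fun a _ => ?_
  have h1 : ∑ b, (if a = b then 0 else π a b) = μ a - π a a := by
    have hc : ∀ b : Fin n, (if a = b then 0 else π a b) = π a b - (if a = b then π a b else 0) := by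
      intro b; by_cases hab : a = b <;> simp [hab]
    rw [Finset.sum_congr rfl (fun b _ => hc b), Finset.sum_sub_distrib,
      Finset.sum_ite_eq Finset.univ a (fun b => π a b), coupling_rowsum hπ a]
    simp
  rw [h1]
  have hπaa_le : π a a ≤ ν a := by
    rw [← coupling_colsum hπ a]
    exact Finset.single_le_sum (fun b _ => hπ.1 b a) (Finset.mem_univ a)
  have hπaa_le' : π a a ≤ μ a := by
    rw [← coupling_rowsum hπ a]
    exact Finset.single_le_sum (fun b _ => hπ.1 a b) (Finset.mem_univ a)
  exact max_le (by linarith) (by linarith)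

lemma cost_nonneg {π : Fin n → Fin n → ℝ} (hπ : ∀ a b, 0 ≤ π a b) :
    0 ≤ ∑' p : Fin n × Fin n, ((completeH n).dist p.1 p.2 : ℝ) * π p.1 p.2 := by
  rw [tsum_fintype]
  exact Finset.sum_nonneg fun p _ => mul_nonneg (Nat.cast_nonneg _) (hπ p.1 p.2)

lemma prod_coupling {μ ν : Fin n → ℝ} (hμ : IsProb μ) (hν : IsProb ν) :
    IsCoupling (fun a b => μ a * ν b) μ ν := by
  refine ⟨fun a b => mul_nonneg ((isProb_iff.mp hμ).1 a) ((isProb_iff.mp hν).1 b), ?_, ?_⟩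
  · intro a; rw [tsum_fintype, ← Finset.mul_sum, (isProb_iff.mp hν).2, mul_one]
  · intro b; rw [tsum_fintype, ← Finset.sum_mul, (isProb_iff.mp hμ).2, one_mul]

lemma W1_bddBelow {μ ν : Fin n → ℝ} :
    BddBelow {c | ∃ π, IsCoupling π μ ν ∧
      c = ∑' p : Fin n × Fin n, ((completeH n).dist p.1 p.2 : ℝ) * π p.1 p.2} := by
  refine ⟨0, fun c hc => ?_⟩
  obtain ⟨π, hπ, rfl⟩ := hc
  exact cost_nonneg hπ.1

lemma W1_nonempty {μ ν : Fin n → ℝ} (hμ : IsProb μ) (hν : IsProb ν) :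
    Set.Nonempty {c | ∃ π, IsCoupling π μ ν ∧
      c = ∑' p : Fin n × Fin n, ((completeH n).dist p.1 p.2 : ℝ) * π p.1 p.2} :=
  ⟨_, _, prod_coupling hμ hν, rfl⟩

lemma S_le_W1 {μ ν : Fin n → ℝ} (hμ : IsProb μ) (hν : IsProb ν) :
    S μ ν ≤ W1 (completeH n) μ ν :=
  le_csInf (W1_nonempty hμ hν) (by rintro c ⟨π, hπ, rfl⟩; exact cost_ge hν hπ)

lemma eq_of_S_eq_zero {μ ν : Fin n → ℝ} (hμ : IsProb μ) (hν : IsProb ν)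
    (h : S μ ν = 0) : μ = ν := by
  have hle : ∀ v, μ v ≤ ν v := by
    intro v
    have h0 : max (μ v - ν v) 0 = 0 := by
      have := Finset.sum_eq_zero_iff_of_nonneg
        (fun v (_ : v ∈ Finset.univ) => le_max_right (μ v - ν v) 0) |>.mp h v (Finset.mem_univ v)
      exact this
    by_contra hlt
    push_neg at hlt
    have := le_max_left (μ v - ν v) 0
    rw [h0] at this
    linarith
  funext v
  have hsum : ∑ v, μ v = ∑ v, ν v := by
    rw [(isProb_iff.mp hμ).2, (isProb_iff.mp hν).2]
  exact (Finset.sum_eq_sum_iff_of_le (fun i _ => hle i)).mp hsum v (Finset.mem_univ v)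

end CompleteProof
namespace CompleteProof

variable {n : ℕ}

lemma W1_le_S {μ ν : Fin n → ℝ} (hμ : IsProb μ) (hν : IsProb ν) :
    W1 (completeH n) μ ν ≤ S μ ν := by
  obtain ⟨hμ0, hμ1⟩ := isProb_iff.mp hμ
  obtain ⟨hν0, hν1⟩ := isProb_iff.mp hν
  rcases eq_or_lt_of_le (S_nonneg μ ν) with hS0 | hSpos
  · -- μ = ν : identity coupling
    have hμν : μ = ν := eq_of_S_eq_zero hμ hν hS0.symm
    subst hμν
    set π : Fin n → Fin n → ℝ := fun a b => if a = b then μ a else 0 with hπdef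
    have hπ : IsCoupling π μ μ := by
      refine ⟨fun a b => by dsimp [π]; split <;> [exact hμ0 a; exact le_refl 0], ?_, ?_⟩
      · intro a; rw [tsum_fintype]; simp [π]
      · intro b; rw [tsum_fintype]; simp [π]
    have hcost : ∑' p : Fin n × Fin n, ((completeH n).dist p.1 p.2 : ℝ) * π p.1 p.2 = 0 := by
      rw [cost_eq]
      refine Finset.sum_eq_zero fun a _ => Finset.sum_eq_zero fun b _ => ?_
      by_cases hab : a = b <;> simp [π, hab]
    rw [← hS0, ← hcost]
    exact csInf_le W1_bddBelow ⟨π, hπ, rfl⟩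
  · set s := S μ ν with hs
    have hs' : S ν μ = s := S_symm hμ hν
    set π : Fin n → Fin n → ℝ := fun a b =>
      (if a = b then min (μ a) (ν a) else 0) + max (μ a - ν a) 0 * max (ν b - μ b) 0 / s
      with hπdef
    have hrow : ∀ a, ∑ b, π a b = μ a := by
      intro a
      have : ∑ b, π a b = min (μ a) (ν a) + max (μ a - ν a) 0 * (∑ b, max (ν b - μ b) 0) / s := by
        rw [Finset.sum_add_distrib, Finset.sum_ite_eq Finset.univ a]
        simp [Finset.mul_sum, Finset.sum_div]
      rw [this]
      have hSν : ∑ b, max (ν b - μ b) 0 = s := hs'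
      rw [hSν, mul_div_assoc, div_self (ne_of_gt hSpos), mul_one]
      rcases le_total (μ a) (ν a) with hle | hle
      · rw [min_eq_left hle, max_eq_right (by linarith), add_zero]
      · rw [min_eq_right hle, max_eq_left (by linarith)]; ring
    have hcol : ∀ b, ∑ a, π a b = ν b := by
      intro b
      have : ∑ a, π a b = min (μ b) (ν b) + (∑ a, max (μ a - ν a) 0) * max (ν b - μ b) 0 / s := by
        rw [Finset.sum_add_distrib, Finset.sum_ite_eq' Finset.univ b]
        simp [Finset.sum_mul, Finset.sum_div]
      rw [this]
      have hSμ : ∑ a, max (μ a - ν a) 0 = s := rfl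
      have hss : s * max (ν b - μ b) 0 / s = max (ν b - μ b) 0 := by
        rw [mul_comm, mul_div_assoc, div_self (ne_of_gt hSpos), mul_one]
      rw [hSμ, hss]
      rcases le_total (μ b) (ν b) with hle | hle
      · rw [min_eq_left hle, max_eq_left (by linarith)]; ring
      · rw [min_eq_right hle, max_eq_right (by linarith), add_zero]
    have hπnn : ∀ a b, 0 ≤ π a b := by
      intro a b
      have : 0 ≤ max (μ a - ν a) 0 * max (ν b - μ b) 0 / s :=
        div_nonneg (mul_nonneg (le_max_right _ _) (le_max_right _ _)) (le_of_lt hSpos)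
      dsimp [π]; split
      · exact add_nonneg (le_min (hμ0 a) (hν0 a)) this
      · simpa using this
    have hπ : IsCoupling π μ ν := by
      refine ⟨hπnn, ?_, ?_⟩
      · intro a; rw [tsum_fintype]; exact hrow a
      · intro b; rw [tsum_fintype]; exact hcol b
    have hcost : ∑' p : Fin n × Fin n, ((completeH n).dist p.1 p.2 : ℝ) * π p.1 p.2 = s := by
      rw [cost_eq]
      have hterm : ∀ a b : Fin n, (if a = b then 0 else π a b) =
          max (μ a - ν a) 0 * max (ν b - μ b) 0 / s
            - (if a = b then max (μ a - ν a) 0 * max (ν b - μ b) 0 / s else 0) := by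
        intro a b
        by_cases hab : a = b <;> simp [π, hab]
      calc ∑ a, ∑ b, (if a = b then 0 else π a b)
          = ∑ a, ((max (μ a - ν a) 0 * (∑ b, max (ν b - μ b) 0)
              - max (μ a - ν a) 0 * max (ν a - μ a) 0) / s) := by
            refine Finset.sum_congr rfl fun a _ => ?_
            rw [Finset.sum_congr rfl (fun b _ => hterm a b), Finset.sum_sub_distrib,
              Finset.sum_ite_eq Finset.univ a]
            simp [Finset.mul_sum, Finset.sum_div, sub_div]
        _ = ∑ a, (max (μ a - ν a) 0 * s / s) := by
            refine Finset.sum_congr rfl fun a _ => ?_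
            have h0 : max (μ a - ν a) 0 * max (ν a - μ a) 0 = 0 := by
              rcases le_total (μ a) (ν a) with hle | hle
              · rw [max_eq_right (by linarith : μ a - ν a ≤ 0)]; ring
              · rw [max_eq_right (by linarith : ν a - μ a ≤ 0)]; ring
            have hSν : ∑ b, max (ν b - μ b) 0 = s := hs'
            rw [h0, sub_zero, hSν]
        _ = s := by
            have : ∀ a : Fin n, max (μ a - ν a) 0 * s / s = max (μ a - ν a) 0 := by
              intro a; rw [mul_div_assoc, div_self (ne_of_gt hSpos), mul_one]
            rw [Finset.sum_congr rfl fun a _ => this a]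
            rfl
    rw [← hcost]
    exact csInf_le W1_bddBelow ⟨π, hπ, rfl⟩

lemma W1_eq_S {μ ν : Fin n → ℝ} (hμ : IsProb μ) (hν : IsProb ν) :
    W1 (completeH n) μ ν = S μ ν :=
  le_antisymm (W1_le_S hμ hν) (S_le_W1 hμ hν)

end CompleteProof
namespace CompleteProof

variable {n : ℕ}

lemma S_chain (ξ : ℕ → Fin n → ℝ) (I : ℕ) :
    S (ξ 0) (ξ I) ≤ ∑ i ∈ Finset.range I, S (ξ i) (ξ (i + 1)) := by
  induction I with
  | zero =>
    simp only [Finset.range_zero, Finset.sum_empty]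
    have : S (ξ 0) (ξ 0) = 0 := by
      refine Finset.sum_eq_zero fun v _ => ?_
      simp
    rw [this]
  | succ I ih =>
    rw [Finset.sum_range_succ]
    calc S (ξ 0) (ξ (I + 1)) ≤ S (ξ 0) (ξ I) + S (ξ I) (ξ (I + 1)) := S_triangle _ _ _
      _ ≤ _ := by linarith

lemma h_concave_sum {h : ℝ → ℝ} {D0 D1 : ℝ} (hc : CostFn h D0 D1)
    {t : ℝ} (ht : t ∈ Set.Icc (0 : ℝ) 1) (s : ℕ → ℝ) (I : ℕ)
    (hs : ∀ i < I, s i ∈ Set.Icc (0 : ℝ) 1)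
    (hts : t ≤ ∑ i ∈ Finset.range I, s i) :
    h t ≤ ∑ i ∈ Finset.range I, h (s i) := by
  have hnn : ∀ i ∈ Finset.range I, 0 ≤ h (s i) := fun i hi =>
    hc.nonneg _ (hs i (Finset.mem_range.mp hi))
  rcases eq_or_lt_of_le ht.1 with ht0 | ht0
  · rw [← ht0, hc.zero]
    exact Finset.sum_nonneg hnn
  by_cases hex : ∃ i < I, t ≤ s i
  · obtain ⟨i, hiI, hti⟩ := hex
    calc h t ≤ h (s i) := hc.mono ht (hs i hiI) hti
      _ ≤ _ := Finset.single_le_sum hnn (Finset.mem_range.mpr hiI)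
  · push_neg at hex
    have key : ∀ i < I, s i / t * h t ≤ h (s i) := by
      intro i hiI
      have hsi := hs i hiI
      have hlt := hex i hiI
      have ha : 0 ≤ s i / t := div_nonneg hsi.1 (le_of_lt ht0)
      have hb : 0 ≤ 1 - s i / t := by
        rw [sub_nonneg, div_le_one ht0]
        exact le_of_lt hlt
      have := hc.concave.2 ht (Set.mem_Icc.mpr ⟨le_refl 0, zero_le_one⟩) ha hb (by ring)
      simpa [hc.zero, smul_eq_mul, div_mul_cancel₀ _ (ne_of_gt ht0)] using this
    calc h t = t / t * h t := by rw [div_self (ne_of_gt ht0), one_mul]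
      _ ≤ (∑ i ∈ Finset.range I, s i) / t * h t := by
          apply mul_le_mul_of_nonneg_right _ (hc.nonneg t ht)
          exact div_le_div_of_nonneg_right hts (le_of_lt ht0)
      _ = ∑ i ∈ Finset.range I, s i / t * h t := by
          rw [Finset.sum_div, Finset.sum_mul]
      _ ≤ _ := Finset.sum_le_sum fun i hi => key i (Finset.mem_range.mp hi)

end CompleteProof
namespace CompleteProof

variable {n : ℕ}

lemma Wh_eq_edge {h : ℝ → ℝ} {D0 D1 : ℝ} (hc : CostFn h D0 D1)
    {μ ν : Fin n → ℝ} (hμ : IsProb μ) (hν : IsProb ν)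
    (he : ∃ e ∈ (completeH n).E, Function.support (fun v => ν v - μ v) ⊆ e) :
    Wh (completeH n) h μ ν = h (S μ ν) := by
  have hadm : WhAdmissible (completeH n) μ ν 1 (fun i => if i = 0 then μ else ν) := by
    refine ⟨by simp, by simp, ?_, ?_⟩
    · intro i hi
      by_cases h0 : i = 0 <;> simp [h0, hμ, hν]
    · intro i hi
      interval_cases i
      obtain ⟨e, heE, hes⟩ := he
      exact ⟨e, heE, by simpa using hes⟩
  have hmem : h (W1 (completeH n) μ ν) ∈ {c | ∃ I ξ, WhAdmissible (completeH n) μ ν I ξ ∧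
      c = ∑ i ∈ Finset.range I, h (W1 (completeH n) (ξ i) (ξ (i + 1)))} := by
    exact ⟨1, fun i => if i = 0 then μ else ν, hadm, by simp⟩
  have hbdd : BddBelow {c | ∃ I ξ, WhAdmissible (completeH n) μ ν I ξ ∧
      c = ∑ i ∈ Finset.range I, h (W1 (completeH n) (ξ i) (ξ (i + 1)))} := by
    refine ⟨0, ?_⟩
    rintro c ⟨I, ξ, ⟨h0, hI, hprob, hstep⟩, rfl⟩
    refine Finset.sum_nonneg fun i hi => ?_
    have hiI := Finset.mem_range.mp hi
    have h1 : IsProb (ξ i) := hprob i (le_of_lt hiI)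
    have h2 : IsProb (ξ (i + 1)) := hprob (i + 1) hiI
    rw [W1_eq_S h1 h2]
    exact hc.nonneg _ ⟨S_nonneg _ _, S_le_one h1 h2⟩
  have hlow : ∀ c ∈ {c | ∃ I ξ, WhAdmissible (completeH n) μ ν I ξ ∧
      c = ∑ i ∈ Finset.range I, h (W1 (completeH n) (ξ i) (ξ (i + 1)))},
      h (S μ ν) ≤ c := by
    rintro c ⟨I, ξ, ⟨h0, hI, hprob, hstep⟩, rfl⟩
    have hW1 : ∀ i ∈ Finset.range I,
        h (W1 (completeH n) (ξ i) (ξ (i + 1))) = h (S (ξ i) (ξ (i + 1))) := by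
      intro i hi
      have hiI := Finset.mem_range.mp hi
      rw [W1_eq_S (hprob i (le_of_lt hiI)) (hprob (i + 1) hiI)]
    rw [Finset.sum_congr rfl hW1]
    refine h_concave_sum hc ⟨S_nonneg _ _, S_le_one hμ hν⟩ _ I ?_ ?_
    · intro i hiI
      exact ⟨S_nonneg _ _, S_le_one (hprob i (le_of_lt hiI)) (hprob (i + 1) hiI)⟩
    · calc S μ ν = S (ξ 0) (ξ I) := by rw [h0, hI]
        _ ≤ _ := S_chain ξ I
  refine le_antisymm ?_ (le_csInf ⟨_, hmem⟩ hlow)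
  calc Wh (completeH n) h μ ν ≤ h (W1 (completeH n) μ ν) := csInf_le hbdd hmem
    _ = h (S μ ν) := by rw [W1_eq_S hμ hν]

end CompleteProof
namespace CompleteProof

variable {n : ℕ}

lemma isProb_dirac (x : Fin n) : IsProb (dirac x) := by
  rw [isProb_iff]
  constructor
  · intro v; unfold dirac; split <;> norm_num
  · rw [Finset.sum_eq_single x (fun b _ hb => by simp [dirac, hb])
      (fun hx => absurd (Finset.mem_univ x) hx)]
    simp [dirac]

lemma S_dirac {x y : Fin n} (hxy : x ≠ y) : S (dirac x) (dirac y) = 1 := by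
  unfold S
  rw [← Finset.sum_subset (Finset.subset_univ ({x, y} : Finset (Fin n)))]
  · rw [Finset.sum_pair hxy]
    simp [dirac, hxy, hxy.symm]
  · intro v _ hv
    simp only [Finset.mem_insert, Finset.mem_singleton, not_or] at hv
    simp [dirac, hv.1, hv.2]

lemma support_dirac_diff {x y : Fin n} :
    Function.support (fun v => dirac y v - dirac x v) ⊆ ({x, y} : Set (Fin n)) := by
  intro v hv
  by_contra hmem
  simp only [Set.mem_insert_iff, Set.mem_singleton_iff, not_or] at hmem
  apply hv
  simp [dirac, hmem.1, hmem.2]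

lemma rw_apply (hn : 2 ≤ n) (α : ℝ) (x v : Fin n) :
    rw (completeH n) α x v = if v = x then α else (1 - α) / ((n : ℝ) - 1) := by
  unfold rw
  rcases eq_or_ne v x with rfl | hv
  · simp
  · rw [if_neg hv, if_neg hv, if_pos (adj_iff.mpr (Ne.symm hv)), degree_eq hn]
    congr 1
    rw [Nat.cast_sub (by omega), Nat.cast_one]

lemma n_sub_one_pos (hn : 2 ≤ n) : (0 : ℝ) < (n : ℝ) - 1 := by
  have : (2 : ℝ) ≤ (n : ℝ) := by exact_mod_cast hn
  linarith

lemma isProb_rw (hn : 2 ≤ n) {α : ℝ} (hα0 : 0 ≤ α) (hα1 : α ≤ 1) (x : Fin n) :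
    IsProb (rw (completeH n) α x) := by
  rw [isProb_iff]
  have hpos := n_sub_one_pos hn
  have hc0 : 0 ≤ (1 - α) / ((n : ℝ) - 1) := div_nonneg (by linarith) (le_of_lt hpos)
  constructor
  · intro v
    rw [rw_apply hn]
    split
    · exact hα0
    · exact hc0
  · have hpt : ∀ v : Fin n, rw (completeH n) α x v =
        (if v = x then α - (1 - α) / ((n : ℝ) - 1) else 0) + (1 - α) / ((n : ℝ) - 1) := by
      intro v; rw [rw_apply hn]; split <;> ring
    rw [Finset.sum_congr rfl fun v _ => hpt v, Finset.sum_add_distrib,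
      Finset.sum_ite_eq' Finset.univ x, Finset.sum_const, Finset.card_univ, Fintype.card_fin]
    simp only [Finset.mem_univ, if_true, nsmul_eq_mul]
    have hne : ((n : ℝ) - 1) ≠ 0 := ne_of_gt hpos
    field_simp
    ring

lemma S_rw (hn : 2 ≤ n) {α : ℝ} {x y : Fin n} (hxy : x ≠ y) :
    S (rw (completeH n) α x) (rw (completeH n) α y)
      = |α - (1 - α) / ((n : ℝ) - 1)| := by
  unfold S
  rw [← Finset.sum_subset (Finset.subset_univ ({x, y} : Finset (Fin n)))]
  · rw [Finset.sum_pair hxy]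
    simp only [rw_apply hn]
    simp only [if_true, if_neg hxy, if_neg hxy.symm]
    set c := (1 - α) / ((n : ℝ) - 1) with hcdef
    rcases le_total α c with hle | hle
    · rw [max_eq_right (by linarith), max_eq_left (by linarith),
        abs_of_nonpos (by linarith)]
      ring
    · rw [max_eq_left (by linarith), max_eq_right (by linarith),
        abs_of_nonneg (by linarith)]
      ring
  · intro v _ hv
    simp only [Finset.mem_insert, Finset.mem_singleton, not_or] at hv
    simp [rw_apply hn, hv.1, hv.2]

lemma support_rw_diff (hn : 2 ≤ n) (α : ℝ) {x y : Fin n} :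
    Function.support (fun v => rw (completeH n) α y v - rw (completeH n) α x v)
      ⊆ ({x, y} : Set (Fin n)) := by
  intro v hv
  by_contra hmem
  simp only [Set.mem_insert_iff, Set.mem_singleton_iff, not_or] at hmem
  apply hv
  simp [rw_apply hn, hmem.1, hmem.2]

lemma h_one_pos {h : ℝ → ℝ} {D0 D1 : ℝ} (hc : CostFn h D0 D1) : 0 < h 1 := by
  have hev : ∀ᶠ t in nhdsWithin 0 (Set.Ioi 0), 0 < h t / t :=
    hc.d0.eventually (eventually_gt_nhds hc.d0_pos)
  have hIcc : Set.Ioo (0 : ℝ) 1 ∈ nhdsWithin 0 (Set.Ioi 0) :=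
    Ioo_mem_nhdsGT_of_mem ⟨le_refl 0, one_pos⟩
  obtain ⟨t, ht1, ht2⟩ := (hev.and (eventually_of_mem hIcc fun t ht => ht)).exists
  have hpos : 0 < h t := by
    have := mul_pos ht1 (show (0:ℝ) < t from ht2.1)
    rwa [div_mul_cancel₀ _ (ne_of_gt ht2.1)] at this
  calc 0 < h t := hpos
    _ ≤ h 1 := hc.mono ⟨le_of_lt ht2.1, le_of_lt ht2.2⟩ ⟨zero_le_one, le_refl 1⟩ (le_of_lt ht2.2)

end CompleteProof

/-- Curvatures of the complete graph `K_n`. -/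
theorem curvature_complete_graph (n : ℕ) (hn : 2 ≤ n)
    (h : ℝ → ℝ) (D0 D1 : ℝ) (hc : CostFn h D0 D1)
    (x y : Fin n) (hxy : x ≠ y) :
    (∀ α ∈ Set.Ico (0 : ℝ) 1,
      ORic (completeH n) h α x y =
        (h 1 - h |α - (1 - α) / ((n : ℝ) - 1)|) / h 1) ∧
    hLLY (completeH n) h x y = ((n : ℝ) / ((n : ℝ) - 1)) * (D1 / h 1) := by
  open CompleteProof in
  have h1pos : 0 < h 1 := h_one_pos hc
  have h1ne : h 1 ≠ 0 := ne_of_gt h1pos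
  have hnpos := n_sub_one_pos hn
  have hn2 : (2 : ℝ) ≤ (n : ℝ) := by exact_mod_cast hn
  have part1 : ∀ α ∈ Set.Ico (0 : ℝ) 1,
      ORic (completeH n) h α x y =
        (h 1 - h |α - (1 - α) / ((n : ℝ) - 1)|) / h 1 := by
    intro α hα
    have hμ := isProb_rw hn hα.1 (le_of_lt hα.2) x
    have hν := isProb_rw hn hα.1 (le_of_lt hα.2) y
    unfold ORic
    rw [Wh_eq_edge hc hμ hν ⟨{x, y}, edge_mem hxy, support_rw_diff hn α⟩,
      Wh_eq_edge hc (isProb_dirac x) (isProb_dirac y)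
        ⟨{x, y}, edge_mem hxy, support_dirac_diff⟩,
      S_rw hn hxy, S_dirac hxy]
    field_simp
  refine ⟨part1, ?_⟩
  set t : ℝ → ℝ := fun α => α - (1 - α) / ((n : ℝ) - 1) with htdef
  have hstep1 : Filter.Tendsto t (nhdsWithin 1 (Set.Iio 1)) (nhdsWithin 1 (Set.Iio 1)) := by
    rw [tendsto_nhdsWithin_iff]
    constructor
    · have hcont : Continuous t := by
        apply Continuous.sub continuous_id
        exact (continuous_const.sub continuous_id).div_const _
      have ht1 : t 1 = 1 := by simp [htdef]
      have := hcont.tendsto 1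
      rw [ht1] at this
      exact this.mono_left nhdsWithin_le_nhds
    · filter_upwards [self_mem_nhdsWithin] with α (hα : α < 1)
      have hpos : 0 < (1 - α) / ((n : ℝ) - 1) := div_pos (by linarith) hnpos
      show t α < 1
      simp only [htdef]
      linarith
  have hstep2 : Filter.Tendsto (fun α => (h 1 - h (t α)) / (1 - t α))
      (nhdsWithin 1 (Set.Iio 1)) (nhds D1) := hc.d1.comp hstep1
  have hstep3 : Filter.Tendsto
      (fun α => (h 1 - h (t α)) / (1 - t α) * ((n : ℝ) / ((n : ℝ) - 1) / h 1))
      (nhdsWithin 1 (Set.Iio 1)) (nhds (D1 * ((n : ℝ) / ((n : ℝ) - 1) / h 1))) :=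
    hstep2.mul_const _
  have hstep4 : ∀ α ∈ Set.Ioo (1 / 2 : ℝ) 1,
      ORic (completeH n) h α x y / (1 - α)
        = (h 1 - h (t α)) / (1 - t α) * ((n : ℝ) / ((n : ℝ) - 1) / h 1) := by
    intro α hα
    have hα0 : (0 : ℝ) ≤ α := by linarith [hα.1]
    have hα1 : α < 1 := hα.2
    have hdle : (1 - α) / ((n : ℝ) - 1) ≤ 1 - α :=
      div_le_self (by linarith) (by linarith)
    have htnn : 0 ≤ t α := by
      simp only [htdef]
      linarith [hα.1]
    have habs : |α - (1 - α) / ((n : ℝ) - 1)| = t α := abs_of_nonneg htnn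
    rw [part1 α ⟨hα0, hα1⟩, habs]
    have h1t : 1 - t α = (1 - α) * ((n : ℝ) / ((n : ℝ) - 1)) := by
      simp only [htdef]
      field_simp
      ring
    rw [h1t]
    have h1α : (1 : ℝ) - α ≠ 0 := by linarith
    have hne : ((n : ℝ) - 1) ≠ 0 := ne_of_gt hnpos
    have hnne : (n : ℝ) ≠ 0 := by linarith
    field_simp
  have heq : (fun α => ORic (completeH n) h α x y / (1 - α))
      =ᶠ[nhdsWithin 1 (Set.Iio 1)]
      (fun α => (h 1 - h (t α)) / (1 - t α) * ((n : ℝ) / ((n : ℝ) - 1) / h 1)) :=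
    Filter.eventually_of_mem (Ioo_mem_nhdsLT_of_mem ⟨by norm_num, le_refl (1:ℝ)⟩) hstep4
  have hT : Filter.Tendsto (fun α => ORic (completeH n) h α x y / (1 - α))
      (nhdsWithin 1 (Set.Iio 1)) (nhds (D1 * ((n : ℝ) / ((n : ℝ) - 1) / h 1))) :=
    hstep3.congr' heq.symm
  rw [hLLY, hT.liminf_eq]
  ring
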